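/- Trace-optimality of the Kalman gain: let P : Matrix (Fin nc) (Fin nc) ℝ be symmetric, C : Matrix (Fin ny) (Fin nc) ℝ, and S : Matrix (Fin ny) (Fin ny) ℝ symmetric positive definite. Define f(K) = P - P * Cᵀ * Kᵀ - K * C * P + K * S * Kᵀ and K* = P * Cᵀ * S⁻¹. Then for every K : Matrix (Fin nc) (Fin ny) ℝ, Matrix.trace (f(K*)) ≤ Matrix.trace (f(K)); i.e., K* minimizes the trace of the posterior error covariance over all gains. -/

import Mathlib

open Matrix

lemma psd_trace_nonneg {n : ℕ} {A : Matrix (Fin n) (Fin n) ℝ} (hA : A.PosSemidef) :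
    0 ≤ Matrix.trace A := by
  rw [Matrix.trace]
  apply Finset.sum_nonneg
  intro i _
  have := hA.dotProduct_mulVec_nonneg (Pi.single i 1)
  simpa [dotProduct, mulVec, Pi.single_apply, Finset.sum_ite_eq, Matrix.diag] using this

/-- Trace-optimality of the Kalman gain. -/
theorem kalman_gain_trace_optimal (nc ny : ℕ)
    (P : Matrix (Fin nc) (Fin nc) ℝ) (hP : P.IsSymm)
    (C : Matrix (Fin ny) (Fin nc) ℝ)
    (S : Matrix (Fin ny) (Fin ny) ℝ) (hS : S.PosDef)
    (f : Matrix (Fin nc) (Fin ny) ℝ → Matrix (Fin nc) (Fin nc) ℝ)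
    (hf : ∀ K, f K = P - P * Cᵀ * Kᵀ - K * C * P + K * S * Kᵀ)
    (Kstar : Matrix (Fin nc) (Fin ny) ℝ) (hKstar : Kstar = P * Cᵀ * S⁻¹)
    (K : Matrix (Fin nc) (Fin ny) ℝ) :
    Matrix.trace (f Kstar) ≤ Matrix.trace (f K) := by
  have hdet : IsUnit S.det := isUnit_iff_ne_zero.mpr (ne_of_gt hS.det_pos)
  have hSinv : S⁻¹ * S = 1 := nonsing_inv_mul S hdet
  have hSinvS : S * S⁻¹ = 1 := mul_nonsing_inv S hdet
  have hSsymm : Sᵀ = S := by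
    have := hS.isHermitian
    rwa [Matrix.IsHermitian, conjTranspose_eq_transpose_of_trivial] at this
  have hSinvsymm : (S⁻¹)ᵀ = S⁻¹ := by
    rw [transpose_nonsing_inv, hSsymm]
  have hPsymm : Pᵀ = P := hP
  have hKstarT : Kstarᵀ = S⁻¹ * (C * P) := by
    rw [hKstar, transpose_mul, transpose_mul, transpose_transpose, hSinvsymm, hPsymm]
  have a1 : S * Kstarᵀ = C * P := by
    rw [hKstarT, ← Matrix.mul_assoc, hSinvS, Matrix.one_mul]
  have e1' : Kstar * (S * Kᵀ) = P * (Cᵀ * Kᵀ) := by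
    rw [← Matrix.mul_assoc, hKstar, Matrix.mul_assoc _ S⁻¹ S, hSinv, Matrix.mul_one,
      Matrix.mul_assoc]
  have a2 : P * (Cᵀ * Kstarᵀ) = Kstar * (C * P) := by
    rw [hKstarT, hKstar]
    simp only [Matrix.mul_assoc]
  -- key identity
  have key : f K = f Kstar + (K - Kstar) * S * (K - Kstar)ᵀ := by
    rw [hf, hf]
    have expand : (K - Kstar) * S * (K - Kstar)ᵀ
        = K * (S * Kᵀ) - K * (S * Kstarᵀ) - Kstar * (S * Kᵀ) + Kstar * (S * Kstarᵀ) := by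
      rw [transpose_sub]
      simp only [Matrix.sub_mul, Matrix.mul_sub, Matrix.mul_assoc]
      abel
    rw [expand]
    simp only [Matrix.mul_assoc]
    rw [a1, e1', a2]
    abel
  have hpsd : ((K - Kstar) * S * (K - Kstar)ᵀ).PosSemidef := by
    have := hS.posSemidef.mul_mul_conjTranspose_same (K - Kstar)
    rwa [conjTranspose_eq_transpose_of_trivial] at this
  have htr : 0 ≤ Matrix.trace ((K - Kstar) * S * (K - Kstar)ᵀ) := psd_trace_nonneg hpsd
  rw [key, trace_add]
  linarith
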